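/- arXiv:0912.5182 — 5 statements merged into one kernel-verified Lean document; each statement's English description precedes it below -/
import Mathlib

section
/- Let U be a finite set, v ∈ U, t : U → ℝ, and Γ ⊆ ℝ^U a nonempty closed convex set such that for every x ∈ ℝ there exists s ∈ Γ with s v = x. Define Ẽ(x) = inf { ∑_{u ∈ U} (s u - t u)^2 | s ∈ Γ, s v = x }. Then Ẽ is strictly convex: for x ≠ y and α ∈ (0,1), Ẽ(αx + (1-α)y) < α Ẽ(x) + (1-α) Ẽ(y). -/
open Filter

private lemma dist_sq_le_sum {U : Type*} [Fintype U] (t s : U → ℝ) :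
    dist s t ^ 2 ≤ ∑ u, (s u - t u) ^ 2 := by
  have h0 : (0:ℝ) ≤ ∑ u, (s u - t u) ^ 2 :=
    Finset.sum_nonneg fun u _ => sq_nonneg _
  have h : dist s t ≤ Real.sqrt (∑ u, (s u - t u) ^ 2) := by
    rw [dist_pi_le_iff (Real.sqrt_nonneg _)]
    intro u
    rw [Real.dist_eq, ← Real.sqrt_sq_eq_abs]
    exact Real.sqrt_le_sqrt (Finset.single_le_sum (f := fun i => (s i - t i) ^ 2) (fun i _ => sq_nonneg _) (Finset.mem_univ u))
  calc dist s t ^ 2 ≤ Real.sqrt (∑ u, (s u - t u) ^ 2) ^ 2 :=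
        pow_le_pow_left₀ dist_nonneg h 2
    _ = ∑ u, (s u - t u) ^ 2 := Real.sq_sqrt h0

private lemma exists_min {U : Type*} [Fintype U] (t : U → ℝ) (S : Set (U → ℝ))
    (hS : IsClosed S) (hne : S.Nonempty) :
    ∃ m ∈ S, ∀ s ∈ S, ∑ u, (m u - t u) ^ 2 ≤ ∑ u, (s u - t u) ^ 2 := by
  set f : (U → ℝ) → ℝ := fun s => ∑ u, (s u - t u) ^ 2 with hf
  have hcont : Continuous f := by
    apply continuous_finset_sum
    intro u _
    exact ((continuous_apply u).sub continuous_const).pow 2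
  have htend : Tendsto f (cocompact (U → ℝ)) atTop := by
    apply tendsto_atTop_mono (fun s => dist_sq_le_sum t s)
    exact (tendsto_pow_atTop two_ne_zero).comp (tendsto_dist_right_cocompact_atTop t)
  obtain ⟨x₀, hx₀⟩ := hne
  obtain ⟨m, hm, hmin⟩ := hcont.continuousOn.exists_isMinOn' hS hx₀
    ((htend.eventually_ge_atTop (f x₀)).filter_mono inf_le_left)
  exact ⟨m, hm, fun s hs => hmin hs⟩

theorem stmt_4 {U : Type*} [Fintype U] (v : U) (t : U → ℝ) (Γ : Set (U → ℝ))
    (hne : Γ.Nonempty) (hclosed : IsClosed Γ) (hconv : Convex ℝ Γ)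
    (hsurj : ∀ x : ℝ, ∃ s ∈ Γ, s v = x)
    (Etil : ℝ → ℝ)
    (hE : ∀ x, Etil x = sInf {E : ℝ | ∃ s ∈ Γ, s v = x ∧ E = ∑ u, (s u - t u) ^ 2}) :
    ∀ x y : ℝ, x ≠ y → ∀ α : ℝ, 0 < α → α < 1 →
      Etil (α * x + (1 - α) * y) < α * Etil x + (1 - α) * Etil y := by
  intro x y hxy α hα hα1
  set f : (U → ℝ) → ℝ := fun s => ∑ u, (s u - t u) ^ 2 with hfdef
  -- slices
  have hslice : ∀ z : ℝ, IsClosed (Γ ∩ {s | s v = z}) ∧ (Γ ∩ {s | s v = z}).Nonempty := by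
    intro z
    constructor
    · exact hclosed.inter (isClosed_eq (continuous_apply v) continuous_const)
    · obtain ⟨s, hs, hsv⟩ := hsurj z
      exact ⟨s, hs, hsv⟩
  have hbdd : ∀ z : ℝ, BddBelow {E : ℝ | ∃ s ∈ Γ, s v = z ∧ E = f s} := by
    intro z
    refine ⟨0, ?_⟩
    rintro E ⟨s, _, _, rfl⟩
    exact Finset.sum_nonneg fun u _ => sq_nonneg _
  -- minimizers attain Etil
  have hmin : ∀ z : ℝ, ∃ m, m ∈ Γ ∧ m v = z ∧ Etil z = f m := by
    intro z
    obtain ⟨m, ⟨hmΓ, hmv⟩, hmmin⟩ := exists_min t _ (hslice z).1 (hslice z).2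
    refine ⟨m, hmΓ, hmv, ?_⟩
    rw [hE]
    apply le_antisymm
    · exact csInf_le (hbdd z) ⟨m, hmΓ, hmv, rfl⟩
    · refine le_csInf ⟨f m, m, hmΓ, hmv, rfl⟩ ?_
      rintro E ⟨s, hs, hsv, rfl⟩
      exact hmmin s ⟨hs, hsv⟩
  obtain ⟨a, haΓ, hav, hEa⟩ := hmin x
  obtain ⟨b, hbΓ, hbv, hEb⟩ := hmin y
  set c : U → ℝ := fun u => α * a u + (1 - α) * b u with hc
  have hcΓ : c ∈ Γ := hconv haΓ hbΓ hα.le (by linarith) (by ring)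
  have hcv : c v = α * x + (1 - α) * y := by simp [hc, hav, hbv]
  have h1 : Etil (α * x + (1 - α) * y) ≤ f c := by
    rw [hE]
    exact csInf_le (hbdd _) ⟨c, hcΓ, hcv, rfl⟩
  have h2 : f c < α * f a + (1 - α) * f b := by
    have hrw : α * f a + (1 - α) * f b
        = ∑ u, (α * (a u - t u) ^ 2 + (1 - α) * (b u - t u) ^ 2) := by
      simp [hfdef, Finset.mul_sum, Finset.sum_add_distrib]
    rw [hrw]
    apply Finset.sum_lt_sum
    · intro u _
      simp only [hc]
      nlinarith [sq_nonneg (a u - b u), mul_pos hα (sub_pos.2 hα1)]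
    · refine ⟨v, Finset.mem_univ v, ?_⟩
      have hab : a v ≠ b v := by rw [hav, hbv]; exact hxy
      simp only [hc]
      nlinarith [sq_pos_of_ne_zero (sub_ne_zero.2 hab), mul_pos hα (sub_pos.2 hα1)]
  rw [hEa, hEb]
  exact h1.trans_lt h2
end

section
/- Let E : ℝ → ℝ be strictly convex and continuous with minimizer s*, γ ≥ 0, and t ∈ ℝ. Define E'(x) = (x - t)^2 + min_{y ∈ [x-γ, x]} E(y). Then E' is strictly convex and continuous. -/
open Set

-- monotonicity of a convex function to the right of its minimizer
lemma mono_right_aux (E : ℝ → ℝ) (hconv : ConvexOn ℝ Set.univ E) (sstar : ℝ)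
    (hmin : ∀ y, E sstar ≤ E y) {a b : ℝ} (hsa : sstar ≤ a) (hab : a ≤ b) :
    E a ≤ E b := by
  rcases eq_or_lt_of_le hsa with rfl | hsa
  · exact hmin b
  rcases eq_or_lt_of_le hab with rfl | hab
  · exact le_rfl
  · exact hconv.le_right_of_left_le (mem_univ sstar) (mem_univ b)
      (by rw [openSegment_eq_Ioo (hsa.trans hab)]; exact ⟨hsa, hab⟩) (hmin a)

lemma mono_left_aux (E : ℝ → ℝ) (hconv : ConvexOn ℝ Set.univ E) (sstar : ℝ)
    (hmin : ∀ y, E sstar ≤ E y) {a b : ℝ} (hab : a ≤ b) (hbs : b ≤ sstar) :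
    E b ≤ E a := by
  rcases eq_or_lt_of_le hbs with rfl | hbs
  · exact hmin a
  rcases eq_or_lt_of_le hab with rfl | hab
  · exact le_rfl
  · exact hconv.le_left_of_right_le (mem_univ a) (mem_univ sstar)
      (by rw [openSegment_eq_Ioo (hab.trans hbs)]; exact ⟨hab, hbs⟩) (hmin b)

theorem stmt_7 (E : ℝ → ℝ) (hconv : StrictConvexOn ℝ Set.univ E)
    (hcont : Continuous E) (sstar : ℝ) (hmin : ∀ y, E sstar ≤ E y)
    (γ : ℝ) (hγ : 0 ≤ γ) (t : ℝ) :
    StrictConvexOn ℝ Set.univ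
        (fun x : ℝ => (x - t) ^ 2 + sInf (E '' Set.Icc (x - γ) x)) ∧
      Continuous (fun x : ℝ => (x - t) ^ 2 + sInf (E '' Set.Icc (x - γ) x)) := by
  have hcv : ConvexOn ℝ Set.univ E := hconv.convexOn
  set g : ℝ → ℝ := fun x => max (x - γ) (min x sstar) with hg
  have hg_mem : ∀ x, g x ∈ Icc (x - γ) x := by
    intro x
    constructor
    · exact le_max_left _ _
    · exact max_le (by linarith) (min_le_left _ _)
  have hg_le : ∀ x, ∀ y ∈ Icc (x - γ) x, E (g x) ≤ E y := by
    intro x y hy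
    rcases le_total sstar (x - γ) with h1 | h1
    · have : g x = x - γ := by
        simp only [hg]
        rw [min_eq_right (by linarith), max_eq_left h1]
      rw [this]
      exact mono_right_aux E hcv sstar hmin h1 hy.1
    · rcases le_total x sstar with h2 | h2
      · have : g x = x := by
          simp only [hg]
          rw [min_eq_left h2, max_eq_right (by linarith)]
        rw [this]
        exact mono_left_aux E hcv sstar hmin hy.2 h2
      · have : g x = sstar := by
          simp only [hg]
          rw [min_eq_right h2, max_eq_right h1]
        rw [this]; exact hmin y
  have hM : ∀ x, sInf (E '' Icc (x - γ) x) = E (g x) := by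
    intro x
    apply IsLeast.csInf_eq
    exact ⟨⟨g x, hg_mem x, rfl⟩, by rintro _ ⟨y, hy, rfl⟩; exact hg_le x y hy⟩
  -- convexity of M
  have hMconv : ConvexOn ℝ Set.univ fun x => sInf (E '' Icc (x - γ) x) := by
    refine ⟨convex_univ, ?_⟩
    intro x _ y _ a b ha hb hab
    simp only [smul_eq_mul, hM]
    have hmem : a * g x + b * g y ∈ Icc ((a * x + b * y) - γ) (a * x + b * y) := by
      have h1 := hg_mem x; have h2 := hg_mem y
      constructor <;> nlinarith [h1.1, h1.2, h2.1, h2.2]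
    calc E (g (a * x + b * y)) ≤ E (a * g x + b * g y) :=
          hg_le _ _ hmem
      _ ≤ a * E (g x) + b * E (g y) := by
          have := hcv.2 (mem_univ (g x)) (mem_univ (g y)) ha hb hab
          simpa using this
  -- strict convexity of the quadratic part
  have hq : StrictConvexOn ℝ Set.univ fun x : ℝ => (x - t) ^ 2 := by
    have hsq : StrictConvexOn ℝ Set.univ fun x : ℝ => x ^ 2 :=
      Even.strictConvexOn_pow even_two two_ne_zero
    refine ⟨convex_univ, ?_⟩
    intro x _ y _ hxy a b ha hb hab
    have hne : x - t ≠ y - t := fun h => hxy (by linarith [sub_left_injective.eq_iff.mp h])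
    have := hsq.2 (mem_univ (x - t)) (mem_univ (y - t)) hne ha hb hab
    simp only [smul_eq_mul] at this ⊢
    have heq : a * (x - t) + b * (y - t) = a * x + b * y - t := by
      have hb' : b = 1 - a := by linarith
      rw [hb']; ring
    rw [heq] at this
    exact this
  constructor
  · exact hq.add_convexOn hMconv
  · have : (fun x : ℝ => (x - t) ^ 2 + sInf (E '' Icc (x - γ) x))
        = fun x => (x - t) ^ 2 + E (g x) := by
      funext x; rw [hM]
    rw [this]
    exact (by fun_prop : Continuous fun x : ℝ => (x - t) ^ 2).add
      (hcont.comp ((continuous_id.sub continuous_const).max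
        (continuous_id.min continuous_const)))
end

section
/- Let P be the directed path on vertices v_1, …, v_n with arcs (v_i, v_{i+1}), let t : {1,…,n} → ℝ, γ ≥ 0, and let s be the unique minimizer of ∑_i (s_i - t_i)^2 over the set Γ = {s | ∀ i < n, s_i ≤ s_{i+1} ≤ s_i + γ}. Suppose s_{i+1}, …, s_n are fixed to their optimal values and s*_i is the unique minimizer of Ẽ_i(x) = min{∑_{j ≤ i}(z_j - t_j)^2 | z ∈ Γ_i, z_i = x} (Γ_i the constraint set on the prefix). Then s_i = s*_i if s*_i ∈ [s_{i+1} - γ, s_{i+1}], s_i = s_{i+1} - γ if s*_i < s_{i+1} - γ, and s_i = s_{i+1} if s*_i > s_{i+1}. -/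
theorem stmt_8 (n : ℕ) (t : ℕ → ℝ) (γ : ℝ) (hγ : 0 ≤ γ)
    (Γ : ℕ → Set (ℕ → ℝ))
    (hΓ : ∀ m, Γ m =
      {z : ℕ → ℝ | ∀ j, 1 ≤ j → j < m → z j ≤ z (j + 1) ∧ z (j + 1) ≤ z j + γ})
    (s : ℕ → ℝ) (hs : s ∈ Γ n)
    (hopt : ∀ z ∈ Γ n,
      ∑ j ∈ Finset.Icc 1 n, (s j - t j) ^ 2 ≤ ∑ j ∈ Finset.Icc 1 n, (z j - t j) ^ 2)
    (i : ℕ) (h1 : 1 ≤ i) (hin : i < n)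
    (Ei : ℝ → ℝ)
    (hEi : ∀ x, Ei x = sInf {e : ℝ | ∃ z ∈ Γ i, z i = x ∧
      e = ∑ j ∈ Finset.Icc 1 i, (z j - t j) ^ 2})
    (si : ℝ) (hmin : ∀ x, Ei si ≤ Ei x)
    (huniq : ∀ x, (∀ y, Ei x ≤ Ei y) → x = si) :
    (s (i + 1) - γ ≤ si → si ≤ s (i + 1) → s i = si) ∧
    (si < s (i + 1) - γ → s i = s (i + 1) - γ) ∧
    (s (i + 1) < si → s i = s (i + 1)) := by
  have hmemΓ : ∀ (m : ℕ) (z : ℕ → ℝ), z ∈ Γ m ↔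
      ∀ j, 1 ≤ j → j < m → z j ≤ z (j + 1) ∧ z (j + 1) ≤ z j + γ := by
    intro m z; rw [hΓ]; exact Iff.rfl
  have hsi' : s ∈ Γ i := by
    rw [hmemΓ]; intro j hj1 hj2; exact (hmemΓ n s).mp hs j hj1 (hj2.trans hin)
  have hcons : s i ≤ s (i + 1) ∧ s (i + 1) ≤ s i + γ := (hmemΓ n s).mp hs i h1 hin
  set S : ℝ → Set ℝ := fun x => {e : ℝ | ∃ z ∈ Γ i, z i = x ∧
      e = ∑ j ∈ Finset.Icc 1 i, (z j - t j) ^ 2} with hSdef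
  have hEi' : ∀ x, Ei x = sInf (S x) := hEi
  have hne : ∀ x, (S x).Nonempty := by
    intro x
    refine ⟨∑ j ∈ Finset.Icc 1 i, ((fun _ => x) j - t j) ^ 2, fun _ => x, ?_, rfl, rfl⟩
    rw [hmemΓ]; intro j _ _; exact ⟨le_refl x, le_add_of_nonneg_right hγ⟩
  have hbdd : ∀ x, BddBelow (S x) := by
    intro x
    refine ⟨0, ?_⟩
    rintro e ⟨z, hz, hzi, rfl⟩
    positivity
  have hle : ∀ (z : ℕ → ℝ), z ∈ Γ i →
      Ei (z i) ≤ ∑ j ∈ Finset.Icc 1 i, (z j - t j) ^ 2 := by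
    intro z hz
    rw [hEi']
    exact csInf_le (hbdd _) ⟨z, hz, rfl, rfl⟩
  have hge : ∀ (x c : ℝ),
      (∀ z ∈ Γ i, z i = x → c ≤ ∑ j ∈ Finset.Icc 1 i, (z j - t j) ^ 2) → c ≤ Ei x := by
    intro x c h
    rw [hEi']
    refine le_csInf (hne x) ?_
    rintro e ⟨z, hz, hzi, rfl⟩
    exact h z hz hzi
  -- splitting sums
  have hsplit : ∀ (f : ℕ → ℝ), ∑ j ∈ Finset.Icc 1 n, f j
      = ∑ j ∈ Finset.Icc 1 i, f j + ∑ j ∈ Finset.Icc (i + 1) n, f j := by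
    intro f
    have e1 : Finset.Icc 1 n = Finset.Ioc 0 n := Finset.Icc_add_one_left_eq_Ioc 0 n
    have e2 : Finset.Icc 1 i = Finset.Ioc 0 i := Finset.Icc_add_one_left_eq_Ioc 0 i
    have e3 : Finset.Icc (i + 1) n = Finset.Ioc i n := Finset.Icc_add_one_left_eq_Ioc i n
    rw [e1, e2, e3, Finset.sum_Ioc_consecutive f (Nat.zero_le i) hin.le]
  -- Claim B : s i minimizes Ei over the feasible interval
  have hB : ∀ x, s (i + 1) - γ ≤ x → x ≤ s (i + 1) → Ei (s i) ≤ Ei x := by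
    intro x hx1 hx2
    refine hge x _ ?_
    intro z hz hzi
    have hP : Ei (s i) ≤ ∑ j ∈ Finset.Icc 1 i, (s j - t j) ^ 2 := hle s hsi'
    refine hP.trans ?_
    set w : ℕ → ℝ := fun j => if j ≤ i then z j else s j with hw
    have hwΓ : w ∈ Γ n := by
      rw [hmemΓ]; intro j hj1 hj2
      rcases lt_trichotomy j i with hji | rfl | hji
      · have ha : j ≤ i := hji.le
        have hb : j + 1 ≤ i := hji
        simpa [hw, ha, hb] using (hmemΓ i z).mp hz j hj1 hji
      · have hb : ¬ (j + 1 ≤ j) := by omega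
        simp only [hw, le_refl, if_pos, hb, if_neg, not_false_iff]
        rw [hzi]
        exact ⟨hx2, by linarith⟩
      · have ha : ¬ (j ≤ i) := by omega
        have hb : ¬ (j + 1 ≤ i) := by omega
        simpa [hw, ha, hb] using (hmemΓ n s).mp hs j hj1 hj2
    have hoptw := hopt w hwΓ
    rw [hsplit (fun j => (s j - t j) ^ 2), hsplit (fun j => (w j - t j) ^ 2)] at hoptw
    have hpre : ∑ j ∈ Finset.Icc 1 i, (w j - t j) ^ 2
        = ∑ j ∈ Finset.Icc 1 i, (z j - t j) ^ 2 := by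
      refine Finset.sum_congr rfl ?_
      intro j hj
      rw [Finset.mem_Icc] at hj
      simp [hw, hj.2]
    have hsuf : ∑ j ∈ Finset.Icc (i + 1) n, (w j - t j) ^ 2
        = ∑ j ∈ Finset.Icc (i + 1) n, (s j - t j) ^ 2 := by
      refine Finset.sum_congr rfl ?_
      intro j hj
      rw [Finset.mem_Icc] at hj
      have : ¬ (j ≤ i) := by omega
      simp [hw, this]
    rw [hpre, hsuf] at hoptw
    linarith
  -- strong convexity of Ei
  have hsc : ∀ (x y l : ℝ), 0 < l → l < 1 →
      Ei (l * x + (1 - l) * y) ≤ l * Ei x + (1 - l) * Ei y - l * (1 - l) * (x - y) ^ 2 := by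
    intro x y l hl0 hl1
    refine le_of_forall_pos_le_add ?_
    intro ε hε
    obtain ⟨ex, ⟨zx, hzx, hzxi, rfl⟩, hexlt⟩ := Real.lt_sInf_add_pos (hne x) hε
    obtain ⟨ey, ⟨zy, hzy, hzyi, rfl⟩, heylt⟩ := Real.lt_sInf_add_pos (hne y) hε
    rw [← hEi'] at hexlt heylt
    set w : ℕ → ℝ := fun j => l * zx j + (1 - l) * zy j with hw
    have hwΓ : w ∈ Γ i := by
      rw [hmemΓ]; intro j hj1 hj2
      obtain ⟨ha1, ha2⟩ := (hmemΓ i zx).mp hzx j hj1 hj2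
      obtain ⟨hb1, hb2⟩ := (hmemΓ i zy).mp hzy j hj1 hj2
      constructor
      · simp only [hw]; nlinarith
      · simp only [hw]; nlinarith
    have hwi : w i = l * x + (1 - l) * y := by simp [hw, hzxi, hzyi]
    have hEw : Ei (l * x + (1 - l) * y) ≤ ∑ j ∈ Finset.Icc 1 i, (w j - t j) ^ 2 := by
      have := hle w hwΓ
      rwa [hwi] at this
    have hsum : ∑ j ∈ Finset.Icc 1 i, (w j - t j) ^ 2
        = l * ∑ j ∈ Finset.Icc 1 i, (zx j - t j) ^ 2
          + (1 - l) * ∑ j ∈ Finset.Icc 1 i, (zy j - t j) ^ 2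
          - l * (1 - l) * ∑ j ∈ Finset.Icc 1 i, (zx j - zy j) ^ 2 := by
      rw [Finset.mul_sum, Finset.mul_sum, Finset.mul_sum, ← Finset.sum_add_distrib,
        ← Finset.sum_sub_distrib]
      refine Finset.sum_congr rfl ?_
      intro j _
      simp only [hw]
      ring
    have hD : (x - y) ^ 2 ≤ ∑ j ∈ Finset.Icc 1 i, (zx j - zy j) ^ 2 := by
      have h := Finset.single_le_sum (f := fun j => (zx j - zy j) ^ 2)
        (fun j _ => sq_nonneg _) (Finset.mem_Icc.mpr ⟨h1, le_refl i⟩)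
      simpa [hzxi, hzyi] using h
    have hlpos : 0 < l * (1 - l) := by nlinarith
    have hx' : l * (∑ j ∈ Finset.Icc 1 i, (zx j - t j) ^ 2) ≤ l * (Ei x + ε) :=
      mul_le_mul_of_nonneg_left hexlt.le hl0.le
    have hy' : (1 - l) * (∑ j ∈ Finset.Icc 1 i, (zy j - t j) ^ 2) ≤ (1 - l) * (Ei y + ε) :=
      mul_le_mul_of_nonneg_left heylt.le (by linarith)
    have hd' : l * (1 - l) * (x - y) ^ 2 ≤ l * (1 - l) * ∑ j ∈ Finset.Icc 1 i, (zx j - zy j) ^ 2 :=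
      mul_le_mul_of_nonneg_left hD hlpos.le
    nlinarith [hEw, hsum, hx', hy', hd']
  refine ⟨?_, ?_, ?_⟩
  · -- interior case
    intro hlo hhi
    have h0 := hB si hlo hhi
    exact huniq (s i) (fun y => h0.trans (hmin y))
  · -- lower clamp
    intro hlt
    have hail : s (i + 1) - γ ≤ s i := by linarith [hcons.2]
    by_contra hne'
    have hane : s (i + 1) - γ < s i := hail.lt_of_ne (Ne.symm hne')
    set a := s (i + 1) - γ with ha
    have hd : 0 < s i - si := by linarith
    set l : ℝ := (s i - a) / (s i - si) with hl
    have hl0 : 0 < l := div_pos (by linarith) hd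
    have hl1 : l < 1 := by
      rw [hl, div_lt_one hd]; linarith
    have hmix : l * si + (1 - l) * s i = a := by
      rw [hl]; field_simp; ring
    have hca := hsc si (s i) l hl0 hl1
    rw [hmix] at hca
    have hBle : Ei (s i) ≤ Ei a := hB a (le_refl a) (by rw [ha]; linarith)
    have hms : Ei si ≤ Ei (s i) := hmin (s i)
    have hsq : 0 < (si - s i) ^ 2 := by nlinarith
    have hprod : 0 < l * (1 - l) * (si - s i) ^ 2 :=
      mul_pos (mul_pos hl0 (by linarith : (0:ℝ) < 1 - l)) hsq
    have hcomb : l * Ei si ≤ l * Ei (s i) := mul_le_mul_of_nonneg_left hms hl0.le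
    linarith
  · -- upper clamp
    intro hlt
    have hail : s i ≤ s (i + 1) := hcons.1
    by_contra hne'
    have hane : s i < s (i + 1) := hail.lt_of_ne hne'
    set b := s (i + 1) with hb
    have hd : 0 < si - s i := by linarith
    set l : ℝ := (si - b) / (si - s i) with hl
    have hl0 : 0 < l := div_pos (by linarith) hd
    have hl1 : l < 1 := by
      rw [hl, div_lt_one hd]; linarith
    have hmix : l * s i + (1 - l) * si = b := by
      rw [hl]; field_simp; ring
    have hca := hsc (s i) si l hl0 hl1
    rw [hmix] at hca
    have hBle : Ei (s i) ≤ Ei b := hB b (by rw [hb]; linarith) (le_refl b)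
    have hms : Ei si ≤ Ei (s i) := hmin (s i)
    have hsq : 0 < (s i - si) ^ 2 := by nlinarith
    have hprod : 0 < l * (1 - l) * (s i - si) ^ 2 :=
      mul_pos (mul_pos hl0 (by linarith : (0:ℝ) < 1 - l)) hsq
    have hcomb : (1 - l) * Ei si ≤ (1 - l) * Ei (s i) :=
      mul_le_mul_of_nonneg_left hms (by linarith : (0:ℝ) ≤ 1 - l)
    linarith
end

section
/- Let F : ℝ → ℝ be continuous, monotone nondecreasing, with exactly one zero s*, let γ ≥ 0, t ∈ ℝ, and define G(x) = 2(x - t) + F̂(x), where F̂(x) = F(x-γ) for x > s*+γ, F̂(x) = 0 on [s*, s*+γ], and F̂(x) = F(x) for x < s*. Then G is continuous, strictly increasing, and has exactly one zero. -/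
theorem stmt_10 (F : ℝ → ℝ) (hcont : Continuous F) (hmono : Monotone F)
    (sstar : ℝ) (hz : F sstar = 0) (huniq : ∀ x, F x = 0 → x = sstar)
    (γ : ℝ) (hγ : 0 ≤ γ) (t : ℝ)
    (G : ℝ → ℝ)
    (hG : ∀ x, G x = 2 * (x - t) +
      (if sstar + γ < x then F (x - γ) else if x < sstar then F x else 0)) :
    Continuous G ∧ StrictMono G ∧ ∃! x, G x = 0 := by
  have key : ∀ x, (if sstar + γ < x then F (x - γ) else if x < sstar then F x else 0)
      = F (min x sstar) + F (max (x - γ) sstar) := by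
    intro x
    rcases lt_trichotomy x sstar with h | h | h
    · rw [if_neg (by linarith), if_pos h, min_eq_left h.le,
        max_eq_right (by linarith), hz]
      ring
    · subst h
      rw [if_neg (by linarith), if_neg (lt_irrefl _), min_self,
        max_eq_right (by linarith), hz]
      ring
    · rw [min_eq_right h.le, hz]
      by_cases h2 : sstar + γ < x
      · rw [if_pos h2, max_eq_left (by linarith)]; ring
      · rw [if_neg h2, if_neg (by linarith), max_eq_right (by linarith), hz]; ring
  have hGeq : ∀ x, G x = 2 * (x - t) + (F (min x sstar) + F (max (x - γ) sstar)) := by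
    intro x; rw [hG, key]
  have hGfun : G = fun x => 2 * (x - t) + (F (min x sstar) + F (max (x - γ) sstar)) :=
    funext hGeq
  have hcontG : Continuous G := by
    rw [hGfun]
    fun_prop
  have hSM : StrictMono G := by
    intro x y hxy
    rw [hGeq, hGeq]
    have h1 : F (min x sstar) ≤ F (min y sstar) := hmono (min_le_min hxy.le le_rfl)
    have h2 : F (max (x - γ) sstar) ≤ F (max (y - γ) sstar) :=
      hmono (max_le_max (by linarith) le_rfl)
    have : x < y := hxy
    linarith
  refine ⟨hcontG, hSM, ?_⟩
  set a := min sstar t with ha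
  set b := max (sstar + γ) t with hb
  have hab : a ≤ b :=
    le_trans (min_le_left _ _) (le_trans (le_add_of_nonneg_right hγ) (le_max_left _ _))
  have hGa : G a ≤ 0 := by
    have ha1 : a ≤ sstar := min_le_left _ _
    have ha2 : a ≤ t := min_le_right _ _
    rw [hGeq, min_eq_left ha1, max_eq_right (by linarith), hz]
    have hFa : F a ≤ 0 := hz ▸ hmono ha1
    linarith
  have hGb : 0 ≤ G b := by
    have hb1 : sstar + γ ≤ b := le_max_left _ _
    have hb2 : t ≤ b := le_max_right _ _
    rw [hGeq, min_eq_right (by linarith), max_eq_left (by linarith), hz]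
    have hFb : 0 ≤ F (b - γ) := hz ▸ hmono (by linarith)
    linarith
  obtain ⟨x, _, hx⟩ := intermediate_value_Icc hab hcontG.continuousOn ⟨hGa, hGb⟩
  exact ⟨x, hx, fun y hy => hSM.injective (hy.trans hx.symm)⟩
end

section
/- Let E₁, …, E_k : ℝ → ℝ be strictly convex continuous functions, each attaining a minimum, and let t ∈ ℝ, γ ≥ 0. Define E(x) = (x - t)^2 + ∑_{j=1}^k min_{y ∈ [x-γ, x]} E_j(y). Then E is strictly convex, continuous, and attains a unique minimum on ℝ. -/
open Set Filter

private lemma win_ne {f : ℝ → ℝ} {γ : ℝ} (hγ : 0 ≤ γ) (x : ℝ) :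
    (f '' Set.Icc (x - γ) x).Nonempty :=
  ⟨f x, Set.mem_image_of_mem _ ⟨by linarith, le_refl x⟩⟩

private lemma win_bdd {f : ℝ → ℝ} (hf : Continuous f) {γ : ℝ} (x : ℝ) :
    BddBelow (f '' Set.Icc (x - γ) x) :=
  (isCompact_Icc.image hf).bddBelow

private lemma win_attained {f : ℝ → ℝ} (hf : Continuous f) {γ : ℝ} (hγ : 0 ≤ γ) (x : ℝ) :
    ∃ y ∈ Set.Icc (x - γ) x, f y = sInf (f '' Set.Icc (x - γ) x) := by
  have h := (isCompact_Icc.image hf).sInf_mem (win_ne hγ x)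
  obtain ⟨y, hy, hfy⟩ := h
  exact ⟨y, hy, hfy⟩

private lemma win_le {f : ℝ → ℝ} (hf : Continuous f) {γ : ℝ} {x y : ℝ}
    (hy : y ∈ Set.Icc (x - γ) x) :
    sInf (f '' Set.Icc (x - γ) x) ≤ f y :=
  csInf_le (win_bdd hf x) (Set.mem_image_of_mem _ hy)

private lemma win_convex {f : ℝ → ℝ} (hf : Continuous f)
    (hc : StrictConvexOn ℝ Set.univ f) {γ : ℝ} (hγ : 0 ≤ γ) :
    ConvexOn ℝ Set.univ (fun x => sInf (f '' Set.Icc (x - γ) x)) := by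
  refine ⟨convex_univ, ?_⟩
  intro x₁ _ x₂ _ a b ha hb hab
  obtain ⟨y₁, hy₁, hfy₁⟩ := win_attained hf hγ x₁
  obtain ⟨y₂, hy₂, hfy₂⟩ := win_attained hf hγ x₂
  have hmem : a • y₁ + b • y₂ ∈ Set.Icc (a • x₁ + b • x₂ - γ) (a • x₁ + b • x₂) := by
    simp only [smul_eq_mul]
    constructor
    · nlinarith [hy₁.1, hy₂.1]
    · nlinarith [hy₁.2, hy₂.2]
  calc sInf (f '' Set.Icc (a • x₁ + b • x₂ - γ) (a • x₁ + b • x₂)) ≤ f (a • y₁ + b • y₂) :=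
        win_le hf hmem
    _ ≤ a • f y₁ + b • f y₂ :=
        hc.convexOn.2 (Set.mem_univ y₁) (Set.mem_univ y₂) ha hb hab
    _ = a • sInf (f '' Set.Icc (x₁ - γ) x₁) + b • sInf (f '' Set.Icc (x₂ - γ) x₂) := by
        rw [hfy₁, hfy₂]

private lemma win_lb {f : ℝ → ℝ} (hf : Continuous f) {γ : ℝ} (hγ : 0 ≤ γ) {m : ℝ}
    (hm : ∀ y, f m ≤ f y) (x : ℝ) :
    f m ≤ sInf (f '' Set.Icc (x - γ) x) := by
  obtain ⟨y, _, hfy⟩ := win_attained hf hγ x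
  rw [← hfy]; exact hm y

theorem stmt_18 (k : ℕ) (E : Fin k → ℝ → ℝ)
    (hconv : ∀ j, StrictConvexOn ℝ Set.univ (E j))
    (hcont : ∀ j, Continuous (E j))
    (hmin : ∀ j, ∃ m, ∀ y, E j m ≤ E j y)
    (t : ℝ) (γ : ℝ) (hγ : 0 ≤ γ) :
    StrictConvexOn ℝ Set.univ
        (fun x : ℝ => (x - t) ^ 2 + ∑ j, sInf (E j '' Set.Icc (x - γ) x)) ∧
      Continuous
        (fun x : ℝ => (x - t) ^ 2 + ∑ j, sInf (E j '' Set.Icc (x - γ) x)) ∧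
      ∃! x : ℝ, ∀ y : ℝ,
        (x - t) ^ 2 + ∑ j, sInf (E j '' Set.Icc (x - γ) x) ≤
          (y - t) ^ 2 + ∑ j, sInf (E j '' Set.Icc (y - γ) y) := by
  set g : Fin k → ℝ → ℝ := fun j x => sInf (E j '' Set.Icc (x - γ) x) with hg
  -- convexity of each g j
  have hgconv : ∀ j, ConvexOn ℝ Set.univ (g j) := fun j =>
    win_convex (hcont j) (hconv j) hγ
  -- sum of g j is convex
  have hsum : ConvexOn ℝ Set.univ (fun x => ∑ j, g j x) := by
    classical
    induction (Finset.univ : Finset (Fin k)) using Finset.induction with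
    | empty => simpa using convexOn_const (0 : ℝ) convex_univ
    | insert _ _ hj ih =>
        simpa [Finset.sum_insert hj, Pi.add_def] using (hgconv _).add ih
  -- strict convexity of the quadratic part
  have hq : StrictConvexOn ℝ Set.univ (fun x : ℝ => (x - t) ^ 2) := by
    refine ⟨convex_univ, ?_⟩
    intro x _ y _ hxy a b ha hb hab
    simp only [smul_eq_mul]
    have h1 : x - y ≠ 0 := sub_ne_zero.mpr hxy
    have h2 : (x - y) ^ 2 > 0 := by positivity
    have hb' : b = 1 - a := by linarith
    subst hb'
    nlinarith [mul_pos (mul_pos ha hb) h2]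
  have hstrict : StrictConvexOn ℝ Set.univ
      (fun x : ℝ => (x - t) ^ 2 + ∑ j, g j x) := hq.add_convexOn hsum
  -- continuity
  have hgc : ∀ j, Continuous (g j) := by
    intro j
    have h := (hgconv j).continuousOn (C := Set.univ) isOpen_univ
    exact continuousOn_univ.mp h
  have hcontF : Continuous (fun x : ℝ => (x - t) ^ 2 + ∑ j, g j x) := by
    refine Continuous.add (by continuity) ?_
    exact continuous_finset_sum _ fun j _ => hgc j
  refine ⟨hstrict, hcontF, ?_⟩
  -- coercivity
  have hub : ∃ C : ℝ, ∀ x, (x - t) ^ 2 + C ≤ (x - t) ^ 2 + ∑ j, g j x := by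
    classical
    choose m hm using hmin
    refine ⟨∑ j, E j (m j), fun x => ?_⟩
    have : ∀ j ∈ Finset.univ, E j (m j) ≤ g j x := fun j _ =>
      win_lb (hcont j) hγ (hm j) x
    have := Finset.sum_le_sum this
    linarith
  obtain ⟨C, hC⟩ := hub
  have htend : Tendsto (fun x : ℝ => (x - t) ^ 2 + ∑ j, g j x) (cocompact ℝ) atTop := by
    refine tendsto_atTop_mono hC ?_
    have h1 : Tendsto (fun x : ℝ => ‖x - t‖) (cocompact ℝ) atTop := by
      have hmap : Tendsto (fun x : ℝ => x - t) (cocompact ℝ) (cocompact ℝ) :=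
        (Homeomorph.subRight t).map_cocompact.le
      exact tendsto_norm_cocompact_atTop.comp hmap
    have h2 : Tendsto (fun x : ℝ => ‖x - t‖ ^ 2 + C) (cocompact ℝ) atTop :=
      (tendsto_atTop_add_const_right _ C ((tendsto_pow_atTop two_ne_zero).comp h1))
    refine h2.congr fun x => ?_
    rw [Real.norm_eq_abs, sq_abs]
  obtain ⟨x, hx⟩ := hcontF.exists_forall_le htend
  refine ⟨x, hx, ?_⟩
  intro x' hx'
  by_contra hne
  have hne' : x' ≠ x := hne
  have heq : (x - t) ^ 2 + ∑ j, g j x = (x' - t) ^ 2 + ∑ j, g j x' :=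
    le_antisymm (hx x') (hx' x)
  have hmid := hstrict.2 (Set.mem_univ x') (Set.mem_univ x) hne'
      (by norm_num : (0:ℝ) < 1/2) (by norm_num : (0:ℝ) < 1/2) (by norm_num)
  set F := fun x : ℝ => (x - t) ^ 2 + ∑ j, g j x
  have hF : F ((1/2 : ℝ) • x' + (1/2 : ℝ) • x) < F x := by
    calc F ((1/2 : ℝ) • x' + (1/2 : ℝ) • x)
        < (1/2 : ℝ) • F x' + (1/2 : ℝ) • F x := hmid
      _ = F x := by
          have : F x' = F x := heq.symm
          rw [this]; ring_nf
  exact absurd (hx _) (not_le.mpr hF)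
end
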